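/- Let {T_j}_{j∈J} be a finite family of pairwise disjoint nonempty finite subsets of a set X, let S be a nonempty finite subset of X with S ⊆ ⋃_j T_j, and let δ ∈ [0,1] satisfy Σ_{j∈J} |T_j ∩ S|² / (|T_j| · |S|) ≤ 1 − δ. Then |⋃_{j : T_j ∩ S ≠ ∅} T_j| ≥ (1 + δ/2) · |S|. (Equivalently: if P̃ = Σ_j |T_j⟩⟨T_j| is a uniform stoquastic projector, S contains no P̃-bad strings, and ‖P̃|S⟩‖² ≤ 1 − δ, then the support of P̃|S⟩ has size at least (1 + δ/2)|S|.) -/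

import Mathlib

/-- One-term expansion: if a nonempty set `S` is covered by the pairwise disjoint nonempty
sets `T_j` and `Σ_j |T_j ∩ S|²/(|T_j||S|) ≤ 1 - δ`, then the union of the sets `T_j` meeting
`S` has size at least `(1 + δ/2)|S|`. -/
theorem stmt7 {X : Type} [DecidableEq X] {J : Type} [Fintype J]
    (T : J → Finset X)
    (hne : ∀ j, (T j).Nonempty)
    (hdisj : ∀ j j', j ≠ j' → Disjoint (T j) (T j'))
    (S : Finset X) (hSne : S.Nonempty)
    (hcover : ∀ x ∈ S, ∃ j, x ∈ T j)
    (δ : ℝ) (hδ0 : 0 ≤ δ) (hδ1 : δ ≤ 1)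
    (hfrust : ∑ j, ((T j ∩ S).card : ℝ) ^ 2 / (((T j).card : ℝ) * (S.card : ℝ)) ≤ 1 - δ) :
    (1 + δ / 2) * (S.card : ℝ) ≤
      (((Finset.univ.filter (fun j => (T j ∩ S).Nonempty)).biUnion T).card : ℝ) := by
  set F := Finset.univ.filter (fun j => (T j ∩ S).Nonempty) with hF
  have hspos : (0:ℝ) < (S.card : ℝ) := by
    exact_mod_cast Finset.card_pos.mpr hSne
  -- union card = sum of cards
  have hU : ((F.biUnion T).card : ℝ) = ∑ j ∈ F, ((T j).card : ℝ) := by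
    rw [Finset.card_biUnion (fun j _ j' _ h => hdisj j j' h)]
    push_cast; ring
  -- S card = sum of intersection cards over F
  have hSeq : S = F.biUnion (fun j => T j ∩ S) := by
    ext x
    simp only [Finset.mem_biUnion, Finset.mem_inter, hF, Finset.mem_filter,
      Finset.mem_univ, true_and]
    constructor
    · intro hx
      obtain ⟨j, hj⟩ := hcover x hx
      exact ⟨j, ⟨x, Finset.mem_inter.mpr ⟨hj, hx⟩⟩, hj, hx⟩
    · rintro ⟨j, -, -, hx⟩; exact hx
  have hSsum : ((S.card : ℝ)) = ∑ j ∈ F, ((T j ∩ S).card : ℝ) := by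
    conv_lhs => rw [hSeq]
    rw [Finset.card_biUnion]
    · push_cast; ring
    · intro j hj j' hj' h
      exact Finset.disjoint_of_subset_left Finset.inter_subset_left
        (Finset.disjoint_of_subset_right Finset.inter_subset_left (hdisj j j' h))
  -- termwise bound: (2a_j - t_j)/s ≤ a_j²/(t_j s)
  have hterm : ∀ j, (2 * ((T j ∩ S).card : ℝ) - ((T j).card : ℝ)) / (S.card : ℝ)
      ≤ ((T j ∩ S).card : ℝ) ^ 2 / (((T j).card : ℝ) * (S.card : ℝ)) := by
    intro j
    have htpos : (0:ℝ) < ((T j).card : ℝ) := by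
      exact_mod_cast Finset.card_pos.mpr (hne j)
    rw [div_le_div_iff₀ hspos (mul_pos htpos hspos)]
    have h : (0:ℝ) ≤ (((T j ∩ S).card : ℝ) - ((T j).card : ℝ))^2 := sq_nonneg _
    nlinarith
  -- sum the bound
  have hsum : ∑ j, (2 * ((T j ∩ S).card : ℝ) - ((T j).card : ℝ)) / (S.card : ℝ) ≤ 1 - δ :=
    le_trans (Finset.sum_le_sum (fun j _ => hterm j)) hfrust
  -- full sum = F sum + rest, rest ≤ 0, so F sum ≥ full sum. Wrong direction; we need F sum ≤ 1-δ.
  -- Use termwise bound only on F, and for j ∉ F the frustration term is 0 ≥ term. Redo: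
  have hsumF : ∑ j ∈ F, (2 * ((T j ∩ S).card : ℝ) - ((T j).card : ℝ)) / (S.card : ℝ) ≤ 1 - δ := by
    refine le_trans ?_ hfrust
    rw [← Finset.sum_filter_add_sum_filter_not Finset.univ
      (fun j => (T j ∩ S).Nonempty)
      (fun j => ((T j ∩ S).card : ℝ) ^ 2 / (((T j).card : ℝ) * (S.card : ℝ)))]
    have h2 : (0:ℝ) ≤ ∑ j ∈ Finset.univ.filter (fun j => ¬ (T j ∩ S).Nonempty),
        ((T j ∩ S).card : ℝ) ^ 2 / (((T j).card : ℝ) * (S.card : ℝ)) := by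
      apply Finset.sum_nonneg; intro j _; exact div_nonneg (sq_nonneg _) (mul_nonneg (Nat.cast_nonneg _) (Nat.cast_nonneg _))
    have h1 := Finset.sum_le_sum (fun j (hj : j ∈ F) => hterm j)
    linarith
  -- now: (2s - U)/s ≤ 1 - δ
  have hkey : (2 * (S.card : ℝ) - ((F.biUnion T).card : ℝ)) / (S.card : ℝ) ≤ 1 - δ := by
    calc (2 * (S.card : ℝ) - ((F.biUnion T).card : ℝ)) / (S.card : ℝ)
        = ∑ j ∈ F, (2 * ((T j ∩ S).card : ℝ) - ((T j).card : ℝ)) / (S.card : ℝ) := by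
          rw [← Finset.sum_div, hU, hSsum, Finset.mul_sum, ← Finset.sum_sub_distrib]
      _ ≤ 1 - δ := hsumF
  rw [div_le_iff₀ hspos] at hkey
  nlinarith
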